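/- arXiv:2009.13749 — 2 statements merged into one kernel-verified Lean document; each statement's English description precedes it below -/
import Mathlib

section
/- Let M ∈ ℝ^{d×d} admit a factorization M = H L H⁻¹ with H invertible, ‖L‖ ≤ 1 − γ and ‖H‖·‖H⁻¹‖ ≤ κ, for some κ > 0 and 0 < γ ≤ 1. Let W ∈ ℝ^{d×d} be symmetric, let X ∈ ℝ^{d×d} satisfy the fixed-point equation X = M X Mᵀ + W, and let a sequence of symmetric matrices (X̂_t)_{t≥0} evolve by X̂_{t+1} = M X̂_t Mᵀ + W. Then for every t ≥ 0, ‖X̂_t − X‖ ≤ κ²(1 − γ)^{2t}‖X̂_0 − X‖ ≤ κ² e^{−2γt}‖X̂_0 − X‖, where ‖·‖ is the spectral norm. -/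
open Matrix

/-- Spectral (ℓ₂ operator) norm of a real matrix. -/
noncomputable def sNorm {m n : Type*} [Fintype m] [Fintype n] [DecidableEq n]
    (M : Matrix m n ℝ) : ℝ :=
  ‖LinearMap.toContinuousLinearMap (Matrix.toEuclideanLin M)‖

/-- Frobenius norm of a real matrix. -/
noncomputable def fNorm {m n : Type*} [Fintype m] [Fintype n] (M : Matrix m n ℝ) : ℝ :=
  Real.sqrt (Matrix.trace (Mᵀ * M))

/-- `K` is `(κ,γ)`-strongly stable for the pair `(A,B)`. -/
def StronglyStable {d k : ℕ} (A : Matrix (Fin d) (Fin d) ℝ) (B : Matrix (Fin d) (Fin k) ℝ)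
    (K : Matrix (Fin k) (Fin d) ℝ) (κ γ : ℝ) : Prop :=
  0 < κ ∧ 0 < γ ∧ γ ≤ 1 ∧ sNorm K ≤ κ ∧
    ∃ H L : Matrix (Fin d) (Fin d) ℝ, IsUnit H ∧ A + B * K = H * L * H⁻¹ ∧
      sNorm L ≤ 1 - γ ∧ sNorm H * sNorm H⁻¹ ≤ κ

/-- The feasible set of the SDP relaxation of LQ control. -/
def Feasible {d k : ℕ} (A : Matrix (Fin d) (Fin d) ℝ) (B : Matrix (Fin d) (Fin k) ℝ)
    (W : Matrix (Fin d) (Fin d) ℝ) (ν : ℝ)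
    (Sg : Matrix (Fin d ⊕ Fin k) (Fin d ⊕ Fin k) ℝ) : Prop :=
  Sg.PosSemidef ∧ Sg.trace ≤ ν ∧
    Sg.toBlocks₁₁ = fromCols A B * Sg * (fromCols A B)ᵀ + W

/-- The controller `K = Σ_{xu}ᵀ Σ_{xx}⁻¹` extracted from an SDP point. -/
noncomputable def extractK {d k : ℕ} (Sg : Matrix (Fin d ⊕ Fin k) (Fin d ⊕ Fin k) ℝ) :
    Matrix (Fin k) (Fin d) ℝ :=
  (Sg.toBlocks₁₂)ᵀ * (Sg.toBlocks₁₁)⁻¹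

/-- The exploration covariance `V = Σ_{uu} - K Σ_{xx} Kᵀ` extracted from an SDP point. -/
noncomputable def extractV {d k : ℕ} (Sg : Matrix (Fin d ⊕ Fin k) (Fin d ⊕ Fin k) ℝ) :
    Matrix (Fin k) (Fin k) ℝ :=
  Sg.toBlocks₂₂ - extractK Sg * Sg.toBlocks₁₁ * (extractK Sg)ᵀ


open scoped Matrix.Norms.L2Operator

lemma sNorm_eq {m n : Type*} [Fintype m] [Fintype n] [DecidableEq n]
    (M : Matrix m n ℝ) : sNorm M = ‖M‖ := rfl

lemma sNorm_nonneg {m n : Type*} [Fintype m] [Fintype n] [DecidableEq n]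
    (M : Matrix m n ℝ) : 0 ≤ sNorm M := by
  rw [sNorm_eq]; exact norm_nonneg M

lemma sNorm_mul_le {d : ℕ} (A B : Matrix (Fin d) (Fin d) ℝ) :
    sNorm (A * B) ≤ sNorm A * sNorm B := by
  simpa only [sNorm_eq] using Matrix.l2_opNorm_mul A B

lemma sNorm_transpose {d : ℕ} (A : Matrix (Fin d) (Fin d) ℝ) :
    sNorm Aᵀ = sNorm A := by
  have h : Aᵀ = Aᴴ := by ext i j; simp [Matrix.conjTranspose]
  rw [h, sNorm_eq, sNorm_eq]
  exact Matrix.l2_opNorm_conjTranspose A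

lemma sNorm_one_le {d : ℕ} : sNorm (1 : Matrix (Fin d) (Fin d) ℝ) ≤ 1 := by
  unfold sNorm
  have h1 : LinearMap.toContinuousLinearMap
      (Matrix.toEuclideanLin (1 : Matrix (Fin d) (Fin d) ℝ)) = ContinuousLinearMap.id ℝ _ := by
    ext x
    simp [Matrix.toEuclideanLin_apply]
  rw [h1]
  exact ContinuousLinearMap.norm_id_le

/-- exponential convergence of the Lyapunov recursion to the
steady-state covariance for a strongly stable closed-loop matrix. -/
theorem stmt1 {d : ℕ} (M H L W X : Matrix (Fin d) (Fin d) ℝ) (κ γ : ℝ)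
    (hκ : 0 < κ) (hγ0 : 0 < γ) (hγ1 : γ ≤ 1)
    (hH : IsUnit H) (hM : M = H * L * H⁻¹) (hL : sNorm L ≤ 1 - γ)
    (hHκ : sNorm H * sNorm H⁻¹ ≤ κ)
    (hW : W.IsSymm) (hX : X = M * X * Mᵀ + W)
    (Xh : ℕ → Matrix (Fin d) (Fin d) ℝ) (hXh : ∀ t, (Xh t).IsSymm)
    (hrec : ∀ t, Xh (t + 1) = M * Xh t * Mᵀ + W) (t : ℕ) :
    sNorm (Xh t - X) ≤ κ ^ 2 * (1 - γ) ^ (2 * t) * sNorm (Xh 0 - X) ∧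
      κ ^ 2 * (1 - γ) ^ (2 * t) * sNorm (Xh 0 - X) ≤
        κ ^ 2 * Real.exp (-(2 * γ * (t : ℝ))) * sNorm (Xh 0 - X) := by
  have hγ' : (0:ℝ) ≤ 1 - γ := by linarith
  have hHd := (Matrix.isUnit_iff_isUnit_det H).mp hH
  have hHinv : H⁻¹ * H = 1 := Matrix.nonsing_inv_mul H hHd
  have key : ∀ s, Xh s - X = M ^ s * (Xh 0 - X) * (Mᵀ) ^ s := by
    intro s
    induction s with
    | zero => simp
    | succ n ih =>
      have h1 : Xh (n+1) - X = M * (Xh n - X) * Mᵀ := by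
        rw [hrec n]
        nth_rewrite 1 [hX]
        noncomm_ring
      rw [h1, ih, pow_succ' M n, pow_succ (Mᵀ) n]
      noncomm_ring
  have hMs : ∀ s, M ^ s = H * L ^ s * H⁻¹ := by
    intro s
    induction s with
    | zero => simp [Matrix.mul_nonsing_inv H hHd]
    | succ n ih =>
      rw [pow_succ, ih, hM, pow_succ]
      calc H * L ^ n * H⁻¹ * (H * L * H⁻¹)
          = H * L ^ n * (H⁻¹ * H) * L * H⁻¹ := by noncomm_ring
        _ = H * (L ^ n * L) * H⁻¹ := by rw [hHinv]; noncomm_ring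
  have hLn : ∀ s, sNorm (L ^ s) ≤ (1 - γ) ^ s := by
    intro s
    induction s with
    | zero => simpa using sNorm_one_le
    | succ n ih =>
      rw [pow_succ, pow_succ]
      calc sNorm (L ^ n * L) ≤ sNorm (L ^ n) * sNorm L := sNorm_mul_le _ _
        _ ≤ (1 - γ) ^ n * (1 - γ) :=
          mul_le_mul ih hL (sNorm_nonneg L) (pow_nonneg hγ' n)
  have hMn : ∀ s, sNorm (M ^ s) ≤ κ * (1 - γ) ^ s := by
    intro s
    rw [hMs s]
    calc sNorm (H * L ^ s * H⁻¹) ≤ sNorm (H * L ^ s) * sNorm H⁻¹ := sNorm_mul_le _ _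
      _ ≤ (sNorm H * sNorm (L ^ s)) * sNorm H⁻¹ :=
        mul_le_mul_of_nonneg_right (sNorm_mul_le _ _) (sNorm_nonneg _)
      _ = (sNorm H * sNorm H⁻¹) * sNorm (L ^ s) := by ring
      _ ≤ κ * (1 - γ) ^ s :=
        mul_le_mul hHκ (hLn s) (sNorm_nonneg _)
          (le_of_lt hκ) |>.trans_eq rfl
  have hD0 : 0 ≤ sNorm (Xh 0 - X) := sNorm_nonneg _
  have hMt : 0 ≤ sNorm (M ^ t) := sNorm_nonneg _
  have hMtb := hMn t
  have hbnd : sNorm (Xh t - X) ≤ κ ^ 2 * (1 - γ) ^ (2 * t) * sNorm (Xh 0 - X) := by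
    rw [key t]
    have hTp : (Mᵀ) ^ t = (M ^ t)ᵀ := (Matrix.transpose_pow M t).symm
    calc sNorm (M ^ t * (Xh 0 - X) * (Mᵀ) ^ t)
        ≤ sNorm (M ^ t * (Xh 0 - X)) * sNorm ((Mᵀ) ^ t) := sNorm_mul_le _ _
      _ ≤ (sNorm (M ^ t) * sNorm (Xh 0 - X)) * sNorm ((Mᵀ) ^ t) :=
        mul_le_mul_of_nonneg_right (sNorm_mul_le _ _) (sNorm_nonneg _)
      _ = sNorm (M ^ t) * sNorm (M ^ t) * sNorm (Xh 0 - X) := by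
          rw [hTp, sNorm_transpose]; ring
      _ ≤ (κ * (1 - γ) ^ t) * (κ * (1 - γ) ^ t) * sNorm (Xh 0 - X) := by
          have : sNorm (M ^ t) * sNorm (M ^ t) ≤ (κ * (1 - γ) ^ t) * (κ * (1 - γ) ^ t) :=
            mul_le_mul hMtb hMtb hMt (by positivity)
          exact mul_le_mul_of_nonneg_right this hD0
      _ = κ ^ 2 * (1 - γ) ^ (2 * t) * sNorm (Xh 0 - X) := by
          rw [two_mul, pow_add]; ring
  refine ⟨hbnd, ?_⟩
  have hexp : (1 - γ) ^ (2 * t) ≤ Real.exp (-(2 * γ * (t : ℝ))) := by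
    have h1 : 1 - γ ≤ Real.exp (-γ) := by
      have := Real.add_one_le_exp (-γ)
      linarith
    calc (1 - γ) ^ (2 * t) ≤ Real.exp (-γ) ^ (2 * t) :=
        pow_le_pow_left₀ hγ' h1 (2 * t)
      _ = Real.exp (((2 * t : ℕ) : ℝ) * (-γ)) := (Real.exp_nat_mul _ _).symm
      _ = Real.exp (-(2 * γ * (t : ℝ))) := by
          congr 1
          push_cast
          ring
  have hκ2 : (0:ℝ) ≤ κ ^ 2 := by positivity
  calc κ ^ 2 * (1 - γ) ^ (2 * t) * sNorm (Xh 0 - X)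
      ≤ κ ^ 2 * Real.exp (-(2 * γ * (t : ℝ))) * sNorm (Xh 0 - X) := by
        have := mul_le_mul_of_nonneg_left hexp hκ2
        exact mul_le_mul_of_nonneg_right this hD0
end

section
/- Assume W ⪰ σ²I with σ > 0, let ν > 0 and κ = √ν/σ, and let {Σ_t}_{t=1}^T be a sequence of matrices in the SDP feasible set S such that ‖Σ_{t+1} − Σ_t‖ ≤ η for all t, with η ≤ σ²/κ². For each t set K_t = (Σ_t)_{xu}ᵀ (Σ_t)_{xx}⁻¹, V_t = (Σ_t)_{uu} − K_t (Σ_t)_{xx} K_tᵀ, and X_t = (Σ_t)_{xx}. Let X̂_1 be any symmetric positive semidefinite matrix and define X̂_{t+1} = (A + BK_t) X̂_t (A + BK_t)ᵀ + B V_t Bᵀ + W. Then for every t, ‖X̂_{t+1} − X_{t+1}‖ ≤ κ² e^{−t/(2κ²)} ‖X̂_1 − X_1‖ + 4ηκ⁴, where ‖·‖ is the spectral norm. -/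
open Matrix

namespace StmtAux
variable {n : Type*} [Fintype n] [DecidableEq n]

lemma sNorm_nonneg' (M : Matrix n n ℝ) : 0 ≤ sNorm M := norm_nonneg _

omit [DecidableEq n] in
lemma dot_self_nonneg (v : n → ℝ) : 0 ≤ v ⬝ᵥ v :=
  Finset.sum_nonneg fun _ _ => mul_self_nonneg _

omit [DecidableEq n] in
lemma norm_symm_eq (v : n → ℝ) :
    ‖(WithLp.equiv 2 (n → ℝ)).symm v‖ = Real.sqrt (v ⬝ᵥ v) := by
  rw [EuclideanSpace.norm_eq]
  simp [dotProduct, Real.norm_eq_abs, sq_abs, pow_two]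

omit [DecidableEq n] in
lemma sqrt_dot_sq (v : n → ℝ) : Real.sqrt (v ⬝ᵥ v) ^ 2 = v ⬝ᵥ v :=
  Real.sq_sqrt (dot_self_nonneg v)

lemma sNorm_le_bound (M : Matrix n n ℝ) (C : ℝ) (hC : 0 ≤ C)
    (h : ∀ v : n → ℝ, Real.sqrt ((M *ᵥ v) ⬝ᵥ (M *ᵥ v)) ≤ C * Real.sqrt (v ⬝ᵥ v)) :
    sNorm M ≤ C := by
  apply ContinuousLinearMap.opNorm_le_bound _ hC
  intro x
  rw [LinearMap.coe_toContinuousLinearMap']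
  calc ‖Matrix.toEuclideanLin M x‖
      = ‖(WithLp.equiv 2 (n → ℝ)).symm (M *ᵥ (WithLp.equiv 2 (n → ℝ)) x)‖ := by
        rw [Matrix.toEuclideanLin_apply]; rfl
    _ = Real.sqrt ((M *ᵥ (WithLp.equiv 2 (n → ℝ)) x) ⬝ᵥ (M *ᵥ (WithLp.equiv 2 (n → ℝ)) x)) :=
        norm_symm_eq _
    _ ≤ C * Real.sqrt (((WithLp.equiv 2 (n → ℝ)) x) ⬝ᵥ ((WithLp.equiv 2 (n → ℝ)) x)) := h _
    _ = C * ‖x‖ := by rw [← norm_symm_eq]; rfl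

lemma mulVec_norm_le (M : Matrix n n ℝ) (v : n → ℝ) :
    Real.sqrt ((M *ᵥ v) ⬝ᵥ (M *ᵥ v)) ≤ sNorm M * Real.sqrt (v ⬝ᵥ v) := by
  calc Real.sqrt ((M *ᵥ v) ⬝ᵥ (M *ᵥ v))
      = ‖(WithLp.equiv 2 (n → ℝ)).symm (M *ᵥ v)‖ := (norm_symm_eq _).symm
    _ = ‖Matrix.toEuclideanLin M ((WithLp.equiv 2 (n → ℝ)).symm v)‖ := by
        rw [Matrix.toEuclideanLin_apply]; rfl
    _ = ‖LinearMap.toContinuousLinearMap (Matrix.toEuclideanLin M)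
          ((WithLp.equiv 2 (n → ℝ)).symm v)‖ := by
        rw [LinearMap.coe_toContinuousLinearMap']
    _ ≤ sNorm M * ‖(WithLp.equiv 2 (n → ℝ)).symm v‖ :=
        (LinearMap.toContinuousLinearMap (Matrix.toEuclideanLin M)).le_opNorm _
    _ = sNorm M * Real.sqrt (v ⬝ᵥ v) := by rw [norm_symm_eq]

lemma dot_mulVec_abs_le (M : Matrix n n ℝ) (v w : n → ℝ) :
    |v ⬝ᵥ (M *ᵥ w)| ≤ sNorm M * (Real.sqrt (v ⬝ᵥ v) * Real.sqrt (w ⬝ᵥ w)) := by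
  have hcs : |v ⬝ᵥ (M *ᵥ w)| ≤ Real.sqrt (v ⬝ᵥ v) * Real.sqrt ((M *ᵥ w) ⬝ᵥ (M *ᵥ w)) := by
    have h1 := abs_real_inner_le_norm ((WithLp.equiv 2 (n → ℝ)).symm v)
      ((WithLp.equiv 2 (n → ℝ)).symm (M *ᵥ w))
    rw [norm_symm_eq, norm_symm_eq] at h1
    have hinner : (inner ℝ ((WithLp.equiv 2 (n → ℝ)).symm v)
        ((WithLp.equiv 2 (n → ℝ)).symm (M *ᵥ w)) : ℝ) = v ⬝ᵥ (M *ᵥ w) := by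
      simp [PiLp.inner_apply, dotProduct, RCLike.inner_apply, mul_comm]
    rwa [hinner] at h1
  refine hcs.trans ?_
  have h2 := mulVec_norm_le M w
  nlinarith [Real.sqrt_nonneg (v ⬝ᵥ v), Real.sqrt_nonneg (w ⬝ᵥ w),
    Real.sqrt_nonneg ((M *ᵥ w) ⬝ᵥ (M *ᵥ w)), sNorm_nonneg' M]

lemma quad_abs_le (M : Matrix n n ℝ) (v : n → ℝ) :
    |v ⬝ᵥ (M *ᵥ v)| ≤ sNorm M * (v ⬝ᵥ v) := by
  have := dot_mulVec_abs_le M v v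
  rwa [← pow_two, sqrt_dot_sq] at this

omit [DecidableEq n] in
lemma dot_symm (M : Matrix n n ℝ) (hM : Mᵀ = M) (a b : n → ℝ) :
    b ⬝ᵥ (M *ᵥ a) = a ⬝ᵥ (M *ᵥ b) := by
  rw [dotProduct_mulVec, dotProduct_comm, ← Matrix.mulVec_transpose, hM]

omit [DecidableEq n] in
lemma bilin_abs_le (M : Matrix n n ℝ) (hM : Mᵀ = M) (C : ℝ)
    (h : ∀ v : n → ℝ, |v ⬝ᵥ (M *ᵥ v)| ≤ C * (v ⬝ᵥ v)) (v w : n → ℝ) :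
    |v ⬝ᵥ (M *ᵥ w)| ≤ C / 2 * (v ⬝ᵥ v + w ⬝ᵥ w) := by
  have hpol : v ⬝ᵥ (M *ᵥ w) = (((v + w) ⬝ᵥ (M *ᵥ (v + w))) - ((v - w) ⬝ᵥ (M *ᵥ (v - w)))) / 4 := by
    have h1 := dot_symm M hM v w
    simp only [mulVec_add, mulVec_sub, dotProduct_add, add_dotProduct, dotProduct_sub,
      sub_dotProduct] at *
    linarith
  have h1 := h (v + w); have h2 := h (v - w)
  have hpar : (v + w) ⬝ᵥ (v + w) + (v - w) ⬝ᵥ (v - w) = 2 * (v ⬝ᵥ v) + 2 * (w ⬝ᵥ w) := by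
    simp only [dotProduct_add, add_dotProduct, dotProduct_sub, sub_dotProduct]
    ring
  rw [hpol, abs_div, abs_of_nonneg (by norm_num : (0:ℝ) ≤ 4)]
  have h3 := abs_sub ((v + w) ⬝ᵥ (M *ᵥ (v + w))) ((v - w) ⬝ᵥ (M *ᵥ (v - w)))
  have h5 : C * ((v + w) ⬝ᵥ (v + w)) + C * ((v - w) ⬝ᵥ (v - w))
      = C * (2 * (v ⬝ᵥ v) + 2 * (w ⬝ᵥ w)) := by rw [← hpar]; ring
  have h6 : C * (2 * (v ⬝ᵥ v) + 2 * (w ⬝ᵥ w)) / 4 = C / 2 * (v ⬝ᵥ v + w ⬝ᵥ w) := by ring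
  linarith

lemma sNorm_le_of_quad (M : Matrix n n ℝ) (hM : Mᵀ = M) (C : ℝ) (hC : 0 ≤ C)
    (h : ∀ v : n → ℝ, |v ⬝ᵥ (M *ᵥ v)| ≤ C * (v ⬝ᵥ v)) : sNorm M ≤ C := by
  apply sNorm_le_bound M C hC
  intro v
  set w := M *ᵥ v with hw
  set va := Real.sqrt (v ⬝ᵥ v) with hva
  set wb := Real.sqrt (w ⬝ᵥ w) with hwb
  have hva0 : 0 ≤ va := Real.sqrt_nonneg _
  have hwb0 : 0 ≤ wb := Real.sqrt_nonneg _
  rcases eq_or_lt_of_le hwb0 with hb | hb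
  · rw [← hb]; positivity
  rcases eq_or_lt_of_le hva0 with ha | ha
  · -- v ⬝ᵥ v = 0 so v = 0 so w = 0, contradiction with hb
    exfalso
    have hv0 : v ⬝ᵥ v = 0 := by
      have := sqrt_dot_sq v; rw [← hva] at this; rw [← this, ← ha]; ring
    have : v = 0 := dotProduct_self_eq_zero.mp hv0
    rw [this] at hw
    simp only [mulVec_zero] at hw
    rw [hw] at hwb
    simp at hwb
    rw [hwb] at hb; exact lt_irrefl _ hb
  -- main case: apply bilin to (t • w) and (t⁻¹ • v) with t := sqrt (va / wb)
  set t : ℝ := Real.sqrt (va / wb) with ht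
  have ht0 : 0 < t := Real.sqrt_pos.mpr (by positivity)
  have ht2 : t ^ 2 = va / wb := Real.sq_sqrt (by positivity)
  have key := bilin_abs_le M hM C h (t • w) (t⁻¹ • v)
  have hdot1 : (t • w) ⬝ᵥ (t • w) = t ^ 2 * (w ⬝ᵥ w) := by
    simp [smul_dotProduct, dotProduct_smul, smul_eq_mul]; ring
  have hdot2 : (t⁻¹ • v) ⬝ᵥ (t⁻¹ • v) = (t ^ 2)⁻¹ * (v ⬝ᵥ v) := by
    simp [smul_dotProduct, dotProduct_smul, smul_eq_mul]; ring
  have hlhs : (t • w) ⬝ᵥ (M *ᵥ (t⁻¹ • v)) = w ⬝ᵥ w := by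
    rw [mulVec_smul, smul_dotProduct, dotProduct_smul]
    rw [smul_eq_mul, smul_eq_mul, ← hw, ← mul_assoc, mul_inv_cancel₀ (ne_of_gt ht0), one_mul]
  rw [hlhs, hdot1, hdot2] at key
  have hww : w ⬝ᵥ w = wb ^ 2 := (sqrt_dot_sq w).symm
  have hvv : v ⬝ᵥ v = va ^ 2 := (sqrt_dot_sq v).symm
  rw [hww, hvv, ht2] at key
  have habs : w ⬝ᵥ w = |w ⬝ᵥ w| := (abs_of_nonneg (dot_self_nonneg w)).symm
  rw [hww] at habs
  rw [← habs] at key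
  -- key : wb^2 ≤ C/2 * (va/wb * wb^2 + (va/wb)⁻¹ * va^2) = C * va * wb
  have hkey2 : wb ^ 2 ≤ C * va * wb := by
    have hrw : va / wb * wb ^ 2 + (va / wb)⁻¹ * va ^ 2 = 2 * (va * wb) := by
      field_simp; ring
    rw [hrw] at key; linarith
  have := le_of_mul_le_mul_right (by linarith [hkey2] : wb * wb ≤ (C * va) * wb) hb
  linarith


-- Part B: PSD and block helpers
omit [DecidableEq n] in
lemma quad_conj {m : Type*} [Fintype m] (P : Matrix n m ℝ) (Y : Matrix m m ℝ) (v : n → ℝ) :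
    v ⬝ᵥ ((P * Y * Pᵀ) *ᵥ v) = (Pᵀ *ᵥ v) ⬝ᵥ (Y *ᵥ (Pᵀ *ᵥ v)) := by
  rw [← mulVec_mulVec, ← mulVec_mulVec, dotProduct_mulVec, ← Matrix.mulVec_transpose]

omit [DecidableEq n] in
lemma psd_quad_nonneg (X : Matrix n n ℝ) (hX : X.PosSemidef) (v : n → ℝ) :
    0 ≤ v ⬝ᵥ (X *ᵥ v) := by
  have := hX.dotProduct_mulVec_nonneg v
  simpa using this

lemma psd_trace_nonneg (X : Matrix n n ℝ) (hX : X.PosSemidef) : 0 ≤ X.trace := by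
  rw [Matrix.trace]
  apply Finset.sum_nonneg
  intro i _
  have h := psd_quad_nonneg X hX (Pi.single i 1)
  have : (Pi.single i 1 : n → ℝ) ⬝ᵥ (X *ᵥ Pi.single i 1) = X i i := by
    classical
    simp [dotProduct, mulVec, Pi.single_apply]
  rw [this] at h
  exact h

-- quadratic form bounded by trace for PSD
open scoped MatrixOrder in
lemma psd_quad_le_trace (X : Matrix n n ℝ) (hX : X.PosSemidef) (v : n → ℝ) :
    v ⬝ᵥ (X *ᵥ v) ≤ X.trace * (v ⬝ᵥ v) := by
  classical
  set S := CFC.sqrt X with hSdef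
  have hSS : S * S = X := CFC.sqrt_mul_sqrt_self X hX.nonneg
  have hSsym : Sᵀ = S := (CFC.sqrt_nonneg X).isSelfAdjoint
  have h1 : v ⬝ᵥ (X *ᵥ v) = (S *ᵥ v) ⬝ᵥ (S *ᵥ v) := by
    rw [← hSS, ← mulVec_mulVec, dot_symm S hSsym]
  have h2 : ∀ i, ((S *ᵥ v) i) ^ 2 ≤ (∑ j, S i j ^ 2) * (v ⬝ᵥ v) := by
    intro i
    have := Finset.sum_mul_sq_le_sq_mul_sq Finset.univ (fun j => S i j) v
    simpa [mulVec, dotProduct, pow_two] using this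
  have h3 : (S *ᵥ v) ⬝ᵥ (S *ᵥ v) = ∑ i, ((S *ᵥ v) i) ^ 2 := by
    simp [dotProduct, pow_two]
  have hji : ∀ a b, S a b = S b a := fun a b => by
    nth_rewrite 1 [← hSsym]; rw [Matrix.transpose_apply]
  have h4 : X.trace = ∑ i, ∑ j, S i j ^ 2 := by
    rw [← hSS, Matrix.trace]
    unfold Matrix.diag
    rw [← Finset.sum_attach]
    rw [Finset.sum_attach Finset.univ (fun i => (S * S) i i)]
    apply Finset.sum_congr rfl
    intro i _
    rw [Matrix.mul_apply]
    apply Finset.sum_congr rfl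
    intro j _
    rw [hji j i, pow_two]
  rw [h1, h3, h4, Finset.sum_mul]
  exact Finset.sum_le_sum fun i _ => h2 i


omit [DecidableEq n] in
lemma dot_pos_of_ne_zero (v : n → ℝ) (hv : v ≠ 0) : 0 < v ⬝ᵥ v :=
  lt_of_le_of_ne (dot_self_nonneg v) (fun h => hv (dotProduct_self_eq_zero.mp h.symm))

lemma elim_dot {a b : Type*} [Fintype a] [Fintype b] (v : a → ℝ) :
    (Sum.elim v (0 : b → ℝ)) ⬝ᵥ (Sum.elim v 0) = v ⬝ᵥ v := by
  simp [dotProduct, Fintype.sum_sum_type]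

lemma quad_block11 {a b : Type*} [Fintype a] [Fintype b]
    (S : Matrix (a ⊕ b) (a ⊕ b) ℝ) (v : a → ℝ) :
    v ⬝ᵥ (S.toBlocks₁₁ *ᵥ v) = (Sum.elim v 0) ⬝ᵥ (S *ᵥ Sum.elim v 0) := by
  simp [dotProduct, mulVec, Fintype.sum_sum_type, toBlocks₁₁]

lemma quad_block22 {a b : Type*} [Fintype a] [Fintype b]
    (S : Matrix (a ⊕ b) (a ⊕ b) ℝ) (v : b → ℝ) :
    v ⬝ᵥ (S.toBlocks₂₂ *ᵥ v) = (Sum.elim (0 : a → ℝ) v) ⬝ᵥ (S *ᵥ Sum.elim 0 v) := by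
  simp [dotProduct, mulVec, Fintype.sum_sum_type, toBlocks₂₂]

lemma psd_block11 {a b : Type*} [Fintype a] [Fintype b]
    (S : Matrix (a ⊕ b) (a ⊕ b) ℝ) (hS : S.PosSemidef) : S.toBlocks₁₁.PosSemidef := by
  refine PosSemidef.of_dotProduct_mulVec_nonneg ?_ ?_
  · ext i j
    have h := congrFun (congrFun hS.1 (Sum.inl i)) (Sum.inl j)
    simpa [conjTranspose_apply, toBlocks₁₁] using h
  · intro v
    have h := hS.dotProduct_mulVec_nonneg (Sum.elim v 0)
    simp only [star_trivial] at h ⊢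
    rw [quad_block11]
    exact h

lemma psd_block22 {a b : Type*} [Fintype a] [Fintype b]
    (S : Matrix (a ⊕ b) (a ⊕ b) ℝ) (hS : S.PosSemidef) : S.toBlocks₂₂.PosSemidef := by
  refine PosSemidef.of_dotProduct_mulVec_nonneg ?_ ?_
  · ext i j
    have h := congrFun (congrFun hS.1 (Sum.inr i)) (Sum.inr j)
    simpa [conjTranspose_apply, toBlocks₂₂] using h
  · intro v
    have h := hS.dotProduct_mulVec_nonneg (Sum.elim 0 v)
    simp only [star_trivial] at h ⊢
    rw [quad_block22]
    exact h


lemma feas_facts {d k : ℕ} (A : Matrix (Fin d) (Fin d) ℝ) (B : Matrix (Fin d) (Fin k) ℝ)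
    (W : Matrix (Fin d) (Fin d) ℝ) (ν σ : ℝ) (hσ : 0 < σ)
    (hW : (W - σ ^ 2 • (1 : Matrix (Fin d) (Fin d) ℝ)).PosSemidef)
    (Sg : Matrix (Fin d ⊕ Fin k) (Fin d ⊕ Fin k) ℝ) (hf : Feasible A B W ν Sg) :
    (Sg.toBlocks₁₁)ᵀ = Sg.toBlocks₁₁ ∧
    (∀ v, σ ^ 2 * (v ⬝ᵥ v) ≤ v ⬝ᵥ (Sg.toBlocks₁₁ *ᵥ v)) ∧
    (∀ v, v ⬝ᵥ (Sg.toBlocks₁₁ *ᵥ v) ≤ ν * (v ⬝ᵥ v)) ∧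
    Sg.toBlocks₁₁ = (A + B * extractK Sg) * Sg.toBlocks₁₁ * (A + B * extractK Sg)ᵀ
      + B * extractV Sg * Bᵀ + W ∧
    (∀ v, v ⬝ᵥ (((A + B * extractK Sg) * Sg.toBlocks₁₁ * (A + B * extractK Sg)ᵀ) *ᵥ v)
      ≤ v ⬝ᵥ (Sg.toBlocks₁₁ *ᵥ v) - σ ^ 2 * (v ⬝ᵥ v)) ∧
    (extractV Sg)ᵀ = extractV Sg := by
  obtain ⟨hPSD, htr, heq⟩ := hf
  set X := Sg.toBlocks₁₁ with hXdef
  set K := extractK Sg with hKdef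
  set V := extractV Sg with hVdef
  set M := A + B * K with hMdef
  set G := fromCols A B with hGdef
  -- symmetry of the (1,1) block
  have hXpsd : X.PosSemidef := psd_block11 Sg hPSD
  have hXsym : Xᵀ = X := hXpsd.1
  -- quadratic form of W
  have hWq : ∀ v, σ ^ 2 * (v ⬝ᵥ v) ≤ v ⬝ᵥ (W *ᵥ v) := by
    intro v
    have h := hW.dotProduct_mulVec_nonneg v
    simp only [star_trivial, sub_mulVec, smul_mulVec, one_mulVec, dotProduct_sub,
      dotProduct_smul, smul_eq_mul] at h
    linarith
  -- F2 : lower bound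
  have hF2 : ∀ v, σ ^ 2 * (v ⬝ᵥ v) ≤ v ⬝ᵥ (X *ᵥ v) := by
    intro v
    have h0 : v ⬝ᵥ (X *ᵥ v) = v ⬝ᵥ ((G * Sg * Gᵀ) *ᵥ v) + v ⬝ᵥ (W *ᵥ v) := by
      nth_rewrite 1 [heq]
      rw [add_mulVec, dotProduct_add]
    have h1 : 0 ≤ v ⬝ᵥ ((G * Sg * Gᵀ) *ᵥ v) := by
      rw [quad_conj]
      have := hPSD.dotProduct_mulVec_nonneg (Gᵀ *ᵥ v)
      simpa using this
    have h2 := hWq v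
    linarith
  -- F3 : upper bound
  have hF3 : ∀ v, v ⬝ᵥ (X *ᵥ v) ≤ ν * (v ⬝ᵥ v) := by
    intro v
    have h1 := psd_quad_le_trace X hXpsd v
    have htrX : X.trace ≤ ν := by
      have hsplit : Sg.trace = X.trace + Sg.toBlocks₂₂.trace := by
        simp [Matrix.trace, Matrix.diag, Fintype.sum_sum_type, toBlocks₁₁, toBlocks₂₂, hXdef]
      have h22 := psd_trace_nonneg _ (psd_block22 Sg hPSD)
      linarith
    calc v ⬝ᵥ (X *ᵥ v) ≤ X.trace * (v ⬝ᵥ v) := h1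
      _ ≤ ν * (v ⬝ᵥ v) := mul_le_mul_of_nonneg_right htrX (dot_self_nonneg v)
  -- positive definiteness and invertibility
  have hXpd : X.PosDef := by
    refine PosDef.of_dotProduct_mulVec_pos hXpsd.1 fun v hv => ?_
    have h1 := hF2 v
    have h2 := dot_pos_of_ne_zero v hv
    have : 0 < σ ^ 2 * (v ⬝ᵥ v) := by positivity
    simp only [star_trivial]
    linarith
  have hdet : IsUnit X.det := isUnit_iff_ne_zero.mpr hXpd.det_pos.ne'
  haveI : Invertible X := X.invertibleOfIsUnitDet hdet
  -- block identities
  have hKX : K * X = (Sg.toBlocks₁₂)ᵀ := by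
    rw [hKdef, extractK, Matrix.mul_assoc, ← hXdef, nonsing_inv_mul X hdet, Matrix.mul_one]
  have hKT : Kᵀ = X⁻¹ * Sg.toBlocks₁₂ := by
    rw [hKdef, extractK, transpose_mul, transpose_transpose, transpose_nonsing_inv, ← hXdef, hXsym]
  have hS21 : Sg.toBlocks₂₁ = (Sg.toBlocks₁₂)ᵀ := by
    ext i j
    have h := congrFun (congrFun hPSD.1 (Sum.inr i)) (Sum.inl j)
    simpa [conjTranspose_apply, toBlocks₂₁, toBlocks₁₂] using h.symm
  have hS12 : Sg.toBlocks₁₂ = X * Kᵀ := by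
    calc Sg.toBlocks₁₂ = ((Sg.toBlocks₁₂)ᵀ)ᵀ := (transpose_transpose _).symm
      _ = (K * X)ᵀ := by rw [hKX]
      _ = Xᵀ * Kᵀ := transpose_mul _ _
      _ = X * Kᵀ := by rw [hXsym]
  have hS22 : Sg.toBlocks₂₂ = V + K * X * Kᵀ := by
    rw [hVdef, extractV, ← hXdef, ← hKdef]
    abel
  -- V is symmetric
  have hS22sym : (Sg.toBlocks₂₂)ᵀ = Sg.toBlocks₂₂ := (psd_block22 Sg hPSD).1
  have hVsym : Vᵀ = V := by
    rw [hVdef, extractV, transpose_sub, hS22sym, transpose_mul, transpose_mul,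
      transpose_transpose, hXsym, ← hXdef, ← hKdef, ← Matrix.mul_assoc]
  -- the fundamental identity
  have hSgblocks : Sg = fromBlocks X (X * Kᵀ) (K * X) (V + K * X * Kᵀ) := by
    rw [← hS22, ← hS12, hKX, ← hS21, hXdef]
    exact (fromBlocks_toBlocks Sg).symm
  have hF5 : X = M * X * Mᵀ + B * V * Bᵀ + W := by
    nth_rewrite 1 [heq]
    rw [hGdef]
    nth_rewrite 1 [hSgblocks]
    rw [fromCols_mul_fromBlocks, transpose_fromCols, fromCols_mul_fromRows]
    rw [hMdef, transpose_add, transpose_mul]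
    simp only [Matrix.mul_add, Matrix.add_mul, Matrix.mul_assoc]
    abel
  -- F4
  have hF4 : ∀ v, v ⬝ᵥ ((M * X * Mᵀ) *ᵥ v) ≤ v ⬝ᵥ (X *ᵥ v) - σ ^ 2 * (v ⬝ᵥ v) := by
    intro v
    have h0 : v ⬝ᵥ (X *ᵥ v) = v ⬝ᵥ ((M * X * Mᵀ) *ᵥ v) + v ⬝ᵥ ((B * V * Bᵀ) *ᵥ v)
        + v ⬝ᵥ (W *ᵥ v) := by
      nth_rewrite 1 [hF5]
      rw [add_mulVec, add_mulVec, dotProduct_add, dotProduct_add]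
    have h1 : 0 ≤ v ⬝ᵥ ((B * V * Bᵀ) *ᵥ v) := by
      rw [quad_conj]
      -- V PSD via Schur complement
      have hVpsd : V.PosSemidef := by
        have hfb : Sg = fromBlocks X Sg.toBlocks₁₂ (Sg.toBlocks₁₂)ᴴ Sg.toBlocks₂₂ := by
          nth_rewrite 1 [← fromBlocks_toBlocks Sg]
          rw [← hXdef, hS21]
          rfl
        have hschur := (PosDef.fromBlocks₁₁ Sg.toBlocks₁₂ Sg.toBlocks₂₂ hXpd).mp
          (hfb ▸ hPSD)
        have : V = Sg.toBlocks₂₂ - (Sg.toBlocks₁₂)ᴴ * X⁻¹ * Sg.toBlocks₁₂ := by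
          rw [hVdef, extractV, ← hXdef, ← hKdef]
          congr 1
          rw [hKX, hKT, ← Matrix.mul_assoc]
          rfl
        rw [this]
        exact hschur
      have := hVpsd.dotProduct_mulVec_nonneg (Bᵀ *ᵥ v)
      simpa using this
    have h2 := hWq v
    linarith
  exact ⟨hXsym, hF2, hF3, hF5, hF4, hVsym⟩


lemma quad_induction {d : ℕ} (E X MM Δ : ℕ → Matrix (Fin d) (Fin d) ℝ)
    (η a b c₁ Bc : ℝ)
    (hErec : ∀ s, 1 ≤ s → E (s + 1) = MM s * E s * (MM s)ᵀ - Δ s)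
    (hΔ : ∀ s, 1 ≤ s → ∀ v, |v ⬝ᵥ (Δ s *ᵥ v)| ≤ η * (v ⬝ᵥ v))
    (hXnn : ∀ s, 1 ≤ s → ∀ v, 0 ≤ v ⬝ᵥ (X s *ᵥ v))
    (hstep : ∀ s, 1 ≤ s → ∀ v,
      v ⬝ᵥ ((MM s * X s * (MM s)ᵀ) *ᵥ v) ≤ a * (v ⬝ᵥ (X (s + 1) *ᵥ v)))
    (hb : ∀ s, 1 ≤ s → ∀ v, η * (v ⬝ᵥ v) ≤ b * (v ⬝ᵥ (X (s + 1) *ᵥ v)))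
    (ha : 0 ≤ a) (hBc : a * Bc + b ≤ Bc) (hc₁ : 0 ≤ c₁) (hBc0 : 0 ≤ Bc)
    (hbase : ∀ v, |v ⬝ᵥ (E 1 *ᵥ v)| ≤ c₁ * (v ⬝ᵥ (X 1 *ᵥ v))) :
    ∀ s v, |v ⬝ᵥ (E (s + 1) *ᵥ v)| ≤ (a ^ s * c₁ + Bc) * (v ⬝ᵥ (X (s + 1) *ᵥ v)) := by
  intro s
  induction s with
  | zero =>
    intro v
    have h0 := hXnn 1 le_rfl v
    have := hbase v
    simp only [pow_zero, one_mul, zero_add]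
    nlinarith
  | succ s ih =>
    intro v
    have h1s : 1 ≤ s + 1 := Nat.le_add_left 1 s
    have hE := hErec (s + 1) h1s
    rw [hE]
    set u := (MM (s + 1))ᵀ *ᵥ v with hu
    have hquadE : v ⬝ᵥ ((MM (s + 1) * E (s + 1) * (MM (s + 1))ᵀ) *ᵥ v)
        = u ⬝ᵥ (E (s + 1) *ᵥ u) := quad_conj _ _ v
    have hquadX : v ⬝ᵥ ((MM (s + 1) * X (s + 1) * (MM (s + 1))ᵀ) *ᵥ v)
        = u ⬝ᵥ (X (s + 1) *ᵥ u) := quad_conj _ _ v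
    have habs : |v ⬝ᵥ ((MM (s + 1) * E (s + 1) * (MM (s + 1))ᵀ - Δ (s + 1)) *ᵥ v)|
        ≤ |u ⬝ᵥ (E (s + 1) *ᵥ u)| + |v ⬝ᵥ (Δ (s + 1) *ᵥ v)| := by
      rw [sub_mulVec, dotProduct_sub, ← hquadE]
      exact abs_sub _ _
    have i1 := ih u
    have i2 := hstep (s + 1) h1s v
    rw [hquadX] at i2
    have i3 := hΔ (s + 1) h1s v
    have i4 := hb (s + 1) h1s v
    have i5 := hXnn (s + 1 + 1) (by omega) v
    have hcoef : 0 ≤ a ^ s * c₁ + Bc := by positivity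
    have j1 : |u ⬝ᵥ (E (s + 1) *ᵥ u)|
        ≤ (a ^ s * c₁ + Bc) * (a * (v ⬝ᵥ (X (s + 1 + 1) *ᵥ v))) :=
      i1.trans (mul_le_mul_of_nonneg_left i2 hcoef)
    have j2 : (a ^ s * c₁ + Bc) * (a * (v ⬝ᵥ (X (s + 1 + 1) *ᵥ v))) + b * (v ⬝ᵥ (X (s + 1 + 1) *ᵥ v))
        = (a ^ (s + 1) * c₁ + (a * Bc + b)) * (v ⬝ᵥ (X (s + 1 + 1) *ᵥ v)) := by ring
    have j3 : (a ^ (s + 1) * c₁ + (a * Bc + b)) * (v ⬝ᵥ (X (s + 1 + 1) *ᵥ v))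
        ≤ (a ^ (s + 1) * c₁ + Bc) * (v ⬝ᵥ (X (s + 1 + 1) *ᵥ v)) := by
      apply mul_le_mul_of_nonneg_right _ i5
      linarith
    calc |v ⬝ᵥ ((MM (s + 1) * E (s + 1) * (MM (s + 1))ᵀ - Δ (s + 1)) *ᵥ v)|
        ≤ |u ⬝ᵥ (E (s + 1) *ᵥ u)| + |v ⬝ᵥ (Δ (s + 1) *ᵥ v)| := habs
      _ ≤ (a ^ s * c₁ + Bc) * (a * (v ⬝ᵥ (X (s + 1 + 1) *ᵥ v)))
          + b * (v ⬝ᵥ (X (s + 1 + 1) *ᵥ v)) := add_le_add j1 (i3.trans i4)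
      _ = (a ^ (s + 1) * c₁ + (a * Bc + b)) * (v ⬝ᵥ (X (s + 1 + 1) *ᵥ v)) := j2
      _ ≤ (a ^ (s + 1) * c₁ + Bc) * (v ⬝ᵥ (X (s + 1 + 1) *ᵥ v)) := j3

end StmtAux

set_option maxHeartbeats 1600000 in
open StmtAux in
/-- fast covariance convergence along a slowly varying sequence of
feasible SDP solutions (Lemma 4.4 + covariance bound of Cohen et al.). -/
theorem stmt2 {d k : ℕ} (A : Matrix (Fin d) (Fin d) ℝ) (B : Matrix (Fin d) (Fin k) ℝ)
    (W : Matrix (Fin d) (Fin d) ℝ) (ν σ η κ : ℝ) (hσ : 0 < σ) (hν : 0 < ν)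
    (hW : (W - σ ^ 2 • (1 : Matrix (Fin d) (Fin d) ℝ)).PosSemidef)
    (hκ : κ = Real.sqrt ν / σ)
    (Sg : ℕ → Matrix (Fin d ⊕ Fin k) (Fin d ⊕ Fin k) ℝ)
    (hfeas : ∀ t, 1 ≤ t → Feasible A B W ν (Sg t))
    (hvar : ∀ t, 1 ≤ t → sNorm (Sg (t + 1) - Sg t) ≤ η)
    (hηκ : η ≤ σ ^ 2 / κ ^ 2)
    (Xh : ℕ → Matrix (Fin d) (Fin d) ℝ) (hXh1 : (Xh 1).PosSemidef)
    (hrec : ∀ t, 1 ≤ t → Xh (t + 1) =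
      (A + B * extractK (Sg t)) * Xh t * (A + B * extractK (Sg t))ᵀ
        + B * extractV (Sg t) * Bᵀ + W)
    (t : ℕ) (ht : 1 ≤ t) :
    sNorm (Xh (t + 1) - (Sg (t + 1)).toBlocks₁₁) ≤
      κ ^ 2 * Real.exp (-((t : ℝ) / (2 * κ ^ 2))) * sNorm (Xh 1 - (Sg 1).toBlocks₁₁)
        + 4 * η * κ ^ 4 := by
  classical
  have hη0 : 0 ≤ η := le_trans (sNorm_nonneg' _) (hvar 1 le_rfl)
  have hsqν : 0 < Real.sqrt ν := Real.sqrt_pos.mpr hν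
  have hκpos : 0 < κ := by rw [hκ]; positivity
  have hκ2 : κ ^ 2 = ν / σ ^ 2 := by
    rw [hκ, div_pow, Real.sq_sqrt hν.le]
  have hκ4 : κ ^ 4 = ν ^ 2 / σ ^ 4 := by
    have : κ ^ 4 = (κ ^ 2) ^ 2 := by ring
    rw [this, hκ2]
    field_simp
  -- trivial case d = 0
  rcases Nat.eq_zero_or_pos d with hd0 | hdpos
  · subst hd0
    have hzero : ∀ w : Fin 0 → ℝ, w ⬝ᵥ w = 0 := fun w => by
      simp [dotProduct]
    have hL : sNorm (Xh (t + 1) - (Sg (t + 1)).toBlocks₁₁) = 0 := by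
      refine le_antisymm ?_ (sNorm_nonneg' _)
      refine sNorm_le_bound _ 0 le_rfl fun v => ?_
      rw [hzero, hzero, Real.sqrt_zero]
      norm_num
    rw [hL]
    have h1 : 0 ≤ κ ^ 2 * Real.exp (-((t : ℝ) / (2 * κ ^ 2))) *
        sNorm (Xh 1 - (Sg 1).toBlocks₁₁) := by
      have := sNorm_nonneg' (Xh 1 - (Sg 1).toBlocks₁₁)
      positivity
    have h2 : 0 ≤ 4 * η * κ ^ 4 := by positivity
    linarith
  -- main case
  set x : ℝ := σ ^ 2 / ν with hxdef
  have hx_pos : 0 < x := by positivity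
  -- feasibility facts
  have hff := fun (s : ℕ) (hs : 1 ≤ s) => feas_facts A B W ν σ hσ hW (Sg s) (hfeas s hs)
  have hXsym : ∀ s, 1 ≤ s → ((Sg s).toBlocks₁₁)ᵀ = (Sg s).toBlocks₁₁ :=
    fun s hs => (hff s hs).1
  have hF2 : ∀ s, 1 ≤ s → ∀ v, σ ^ 2 * (v ⬝ᵥ v) ≤ v ⬝ᵥ ((Sg s).toBlocks₁₁ *ᵥ v) :=
    fun s hs => (hff s hs).2.1
  have hF3 : ∀ s, 1 ≤ s → ∀ v, v ⬝ᵥ ((Sg s).toBlocks₁₁ *ᵥ v) ≤ ν * (v ⬝ᵥ v) :=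
    fun s hs => (hff s hs).2.2.1
  have hF5 : ∀ s, 1 ≤ s → (Sg s).toBlocks₁₁ =
      (A + B * extractK (Sg s)) * (Sg s).toBlocks₁₁ * (A + B * extractK (Sg s))ᵀ
        + B * extractV (Sg s) * Bᵀ + W :=
    fun s hs => (hff s hs).2.2.2.1
  have hF4 : ∀ s, 1 ≤ s → ∀ v,
      v ⬝ᵥ (((A + B * extractK (Sg s)) * (Sg s).toBlocks₁₁ * (A + B * extractK (Sg s))ᵀ) *ᵥ v)
        ≤ v ⬝ᵥ ((Sg s).toBlocks₁₁ *ᵥ v) - σ ^ 2 * (v ⬝ᵥ v) :=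
    fun s hs => (hff s hs).2.2.2.2.1
  have hVsym : ∀ s, 1 ≤ s → (extractV (Sg s))ᵀ = extractV (Sg s) :=
    fun s hs => (hff s hs).2.2.2.2.2
  -- symmetry of W
  have hWsym : Wᵀ = W := by
    have h : (W - σ ^ 2 • (1 : Matrix (Fin d) (Fin d) ℝ))ᵀ
        = W - σ ^ 2 • (1 : Matrix (Fin d) (Fin d) ℝ) := hW.1
    rw [transpose_sub, transpose_smul, transpose_one] at h
    exact sub_left_inj.mp h
  -- symmetry of Xh
  have hXhsym : ∀ s, 1 ≤ s → (Xh s)ᵀ = Xh s := by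
    intro s hs
    induction s, hs using Nat.le_induction with
    | base => exact hXh1.1
    | succ n hn ih =>
      rw [hrec n hn]
      simp only [transpose_add, transpose_mul, transpose_transpose]
      rw [ih, hVsym n hn, hWsym]
      simp only [Matrix.mul_assoc]
  -- the error recursion
  have hErec : ∀ s, 1 ≤ s → (fun s => Xh s - (Sg s).toBlocks₁₁) (s + 1)
      = (fun s => A + B * extractK (Sg s)) s * (fun s => Xh s - (Sg s).toBlocks₁₁) s
          * ((fun s => A + B * extractK (Sg s)) s)ᵀ
        - (fun s => (Sg (s + 1)).toBlocks₁₁ - (Sg s).toBlocks₁₁) s := by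
    intro s hs
    simp only []
    rw [hrec s hs, Matrix.mul_sub, Matrix.sub_mul]
    have h5' : (A + B * extractK (Sg s)) * (Sg s).toBlocks₁₁ * (A + B * extractK (Sg s))ᵀ
        + (B * extractV (Sg s) * Bᵀ + W) = (Sg s).toBlocks₁₁ := by
      rw [← add_assoc]; exact (hF5 s hs).symm
    have h6 := eq_sub_of_add_eq h5'
    rw [h6]
    abel
  -- Δ quadratic bound
  have hΔq : ∀ s, 1 ≤ s → ∀ v,
      |v ⬝ᵥ ((fun s => (Sg (s + 1)).toBlocks₁₁ - (Sg s).toBlocks₁₁) s *ᵥ v)| ≤ η * (v ⬝ᵥ v) := by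
    intro s hs v
    have hblocks : (Sg (s + 1)).toBlocks₁₁ - (Sg s).toBlocks₁₁
        = (Sg (s + 1) - Sg s).toBlocks₁₁ := by
      ext i j; rfl
    simp only []
    rw [hblocks, quad_block11]
    have h1 := quad_abs_le (Sg (s + 1) - Sg s) (Sum.elim v 0)
    rw [elim_dot v] at h1
    exact h1.trans (mul_le_mul_of_nonneg_right (hvar s hs) (dot_self_nonneg v))
  -- nonnegativity of the X quadratic forms
  have hXnn : ∀ s, 1 ≤ s → ∀ v, 0 ≤ v ⬝ᵥ ((Sg s).toBlocks₁₁ *ᵥ v) := by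
    intro s hs v
    have h1 := hF2 s hs v
    have h2 : 0 ≤ σ ^ 2 * (v ⬝ᵥ v) := mul_nonneg (by positivity) (dot_self_nonneg v)
    linarith
  -- σ² ≤ ν and x ≤ 1
  have hσν : σ ^ 2 ≤ ν := by
    set v : Fin d → ℝ := Pi.single ⟨0, hdpos⟩ 1 with hvdef
    have hvv : v ⬝ᵥ v = 1 := by
      simp [hvdef, dotProduct, Pi.single_apply]
    have h := (hF2 1 le_rfl v).trans (hF3 1 le_rfl v)
    rw [hvv] at h
    linarith
  have hx1 : x ≤ 1 := by
    rw [hxdef]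
    exact (div_le_one hν).mpr hσν
  have hηx : η ≤ σ ^ 2 * x := by
    have heq1 : σ ^ 2 / κ ^ 2 = σ ^ 2 * x := by
      rw [hκ2, hxdef]
      field_simp
    linarith [hηκ, heq1.symm.le, heq1.le]
  -- choose the contraction constants based on the size of x
  obtain ⟨a, b, Bc, ha0, hahalf, hstep, hb, hBc, hBc0, hνBc⟩ :
      ∃ a b Bc : ℝ, 0 ≤ a ∧ a ≤ 1 - x / 2 ∧
        (∀ s, 1 ≤ s → ∀ v,
          v ⬝ᵥ (((A + B * extractK (Sg s)) * (Sg s).toBlocks₁₁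
              * (A + B * extractK (Sg s))ᵀ) *ᵥ v)
            ≤ a * (v ⬝ᵥ ((Sg (s + 1)).toBlocks₁₁ *ᵥ v))) ∧
        (∀ s, 1 ≤ s → ∀ v, η * (v ⬝ᵥ v) ≤ b * (v ⬝ᵥ ((Sg (s + 1)).toBlocks₁₁ *ᵥ v))) ∧
        a * Bc + b ≤ Bc ∧ 0 ≤ Bc ∧ ν * Bc ≤ 4 * η * κ ^ 4 := by
    have hxν : x * ν = σ ^ 2 := by rw [hxdef]; field_simp
    -- the "b" bound, common to both cases
    have hbb : ∀ s, 1 ≤ s → ∀ v, η * (v ⬝ᵥ v)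
        ≤ η / σ ^ 2 * (v ⬝ᵥ ((Sg (s + 1)).toBlocks₁₁ *ᵥ v)) := by
      intro s hs v
      have i2 := hF2 (s + 1) (by omega) v
      have hcoef : 0 ≤ η / σ ^ 2 := by positivity
      have h1 := mul_le_mul_of_nonneg_left i2 hcoef
      have h2 : η / σ ^ 2 * (σ ^ 2 * (v ⬝ᵥ v)) = η * (v ⬝ᵥ v) := by
        field_simp
      linarith
    -- the drift bound, common to both cases
    have hdrift : ∀ s, 1 ≤ s → ∀ v,
        v ⬝ᵥ ((Sg s).toBlocks₁₁ *ᵥ v) - v ⬝ᵥ ((Sg (s + 1)).toBlocks₁₁ *ᵥ v) ≤ η * (v ⬝ᵥ v) := by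
      intro s hs v
      have h1 := hΔq s hs v
      simp only [] at h1
      rw [sub_mulVec, dotProduct_sub] at h1
      have := abs_le.mp h1
      linarith [this.1]
    rcases le_or_gt x (1 / 2) with hxh | hxh
    · -- case x ≤ 1/2
      have hη2 : η ≤ σ ^ 2 / 2 := by nlinarith [hηx, hσ.le]
      have hσηpos : 0 < σ ^ 2 - η := by nlinarith [hσ]
      refine ⟨1 - (σ ^ 2 - η) / ν, η / σ ^ 2, η * ν / (σ ^ 2 * (σ ^ 2 - η)),
        ?_, ?_, ?_, hbb, ?_, ?_, ?_⟩
      · have h1 : (σ ^ 2 - η) / ν ≤ 1 := (div_le_one hν).mpr (by linarith)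
        linarith
      · have h1 : x / 2 ≤ (σ ^ 2 - η) / ν := by
          rw [div_le_div_iff₀ (by norm_num) hν]
          rw [hxdef]
          rw [div_mul_eq_mul_div, div_le_iff₀ hν]
          nlinarith [hν]
        linarith
      · intro s hs v
        have i1 := hF4 s hs v
        have iΔ := hdrift s hs v
        have i3 := hF3 (s + 1) (by omega) v
        have hD0 : 0 ≤ (σ ^ 2 - η) / ν := by positivity
        have hDν : (σ ^ 2 - η) / ν * ν = σ ^ 2 - η := div_mul_cancel₀ _ hν.ne'
        have h4 := mul_le_mul_of_nonneg_left i3 hD0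
        rw [← mul_assoc, hDν] at h4
        have hring : (1 - (σ ^ 2 - η) / ν) * (v ⬝ᵥ ((Sg (s + 1)).toBlocks₁₁ *ᵥ v))
            = v ⬝ᵥ ((Sg (s + 1)).toBlocks₁₁ *ᵥ v)
              - (σ ^ 2 - η) / ν * (v ⬝ᵥ ((Sg (s + 1)).toBlocks₁₁ *ᵥ v)) := by ring
        linarith
      · have heq : (1 - (σ ^ 2 - η) / ν) * (η * ν / (σ ^ 2 * (σ ^ 2 - η))) + η / σ ^ 2
            = η * ν / (σ ^ 2 * (σ ^ 2 - η)) := by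
          field_simp
          ring
        exact le_of_eq heq
      · exact div_nonneg (mul_nonneg hη0 hν.le)
          (le_of_lt (mul_pos (by positivity) hσηpos))
      · rw [hκ4]
        have hrw : ν * (η * ν / (σ ^ 2 * (σ ^ 2 - η))) = η * ν ^ 2 / (σ ^ 2 * (σ ^ 2 - η)) := by
          ring
        have hrw2 : 4 * η * (ν ^ 2 / σ ^ 4) = 4 * η * ν ^ 2 / σ ^ 4 := by ring
        rw [hrw, hrw2, div_le_div_iff₀ (mul_pos (by positivity) hσηpos) (by positivity)]
        have hfac : σ ^ 4 ≤ 4 * (σ ^ 2 * (σ ^ 2 - η)) := by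
          nlinarith [mul_le_mul_of_nonneg_left hη2 (sq_nonneg σ)]
        calc η * ν ^ 2 * σ ^ 4 ≤ η * ν ^ 2 * (4 * (σ ^ 2 * (σ ^ 2 - η))) :=
              mul_le_mul_of_nonneg_left hfac (by positivity)
          _ = 4 * η * ν ^ 2 * (σ ^ 2 * (σ ^ 2 - η)) := by ring
    · -- case x > 1/2
      have hησ : η / σ ^ 2 ≤ x := by
        rw [div_le_iff₀ (show (0:ℝ) < σ ^ 2 by positivity)]
        linarith [hηx]
      have h1x : 0 ≤ 1 - x := by linarith
      refine ⟨(1 - x) * (1 + η / σ ^ 2), η / σ ^ 2, (η / σ ^ 2) / x ^ 2,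
        ?_, ?_, ?_, hbb, ?_, ?_, ?_⟩
      · have : 0 ≤ 1 + η / σ ^ 2 := by positivity
        exact mul_nonneg h1x this
      · nlinarith [hησ, hx1, hxh, h1x]
      · intro s hs v
        have i1 := hF4 s hs v
        have i3s := hF3 s hs v
        have i2next := hF2 (s + 1) (by omega) v
        have iΔ := hdrift s hs v
        have h2 := mul_le_mul_of_nonneg_left i3s hx_pos.le
        rw [← mul_assoc, hxν] at h2
        -- T ≤ (1-x) * P
        have hT : v ⬝ᵥ (((A + B * extractK (Sg s)) * (Sg s).toBlocks₁₁
            * (A + B * extractK (Sg s))ᵀ) *ᵥ v)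
            ≤ (1 - x) * (v ⬝ᵥ ((Sg s).toBlocks₁₁ *ᵥ v)) := by nlinarith [i1, h2]
        -- η n2 ≤ (η/σ²) Q
        have h3 := mul_le_mul_of_nonneg_left i2next (by positivity : (0:ℝ) ≤ η / σ ^ 2)
        have h4 : η / σ ^ 2 * (σ ^ 2 * (v ⬝ᵥ v)) = η * (v ⬝ᵥ v) := by
          field_simp
        -- P ≤ Q + (η/σ²) Q
        have hP : v ⬝ᵥ ((Sg s).toBlocks₁₁ *ᵥ v)
            ≤ v ⬝ᵥ ((Sg (s + 1)).toBlocks₁₁ *ᵥ v)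
              + η / σ ^ 2 * (v ⬝ᵥ ((Sg (s + 1)).toBlocks₁₁ *ᵥ v)) := by linarith
        have h5 := mul_le_mul_of_nonneg_left hP h1x
        have h6 : (1 - x) * (v ⬝ᵥ ((Sg (s + 1)).toBlocks₁₁ *ᵥ v)
              + η / σ ^ 2 * (v ⬝ᵥ ((Sg (s + 1)).toBlocks₁₁ *ᵥ v)))
            = (1 - x) * (1 + η / σ ^ 2) * (v ⬝ᵥ ((Sg (s + 1)).toBlocks₁₁ *ᵥ v)) := by ring
        linarith
      · have h1a : x ^ 2 ≤ 1 - (1 - x) * (1 + η / σ ^ 2) := by nlinarith [hησ, h1x]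
        have hBc0' : 0 ≤ (η / σ ^ 2) / x ^ 2 :=
          div_nonneg (by positivity) (by positivity)
        have h2 := mul_le_mul_of_nonneg_right h1a hBc0'
        have h3 : x ^ 2 * ((η / σ ^ 2) / x ^ 2) = η / σ ^ 2 := by
          field_simp
        nlinarith [h2, h3]
      · exact div_nonneg (by positivity) (by positivity)
      · -- ν * Bc ≤ 4 η κ⁴
        have hκ21 : 1 ≤ κ ^ 2 := by
          rw [hκ2]
          exact (one_le_div (by positivity)).mpr hσν
        have hκ42 : κ ^ 2 ≤ κ ^ 4 := by nlinarith [hκ21]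
        have hstep1 : ν * ((η / σ ^ 2) / x ^ 2) ≤ 4 * η * κ ^ 2 := by
          rw [hκ2]
          have hx2 : (0:ℝ) < x ^ 2 := by positivity
          have hq1 : (η / σ ^ 2) / x ^ 2 ≤ 4 * (η / σ ^ 2) := by
            rw [div_le_iff₀ hx2]
            nlinarith [mul_le_mul_of_nonneg_left
              (show (1:ℝ) ≤ 4 * x ^ 2 by nlinarith [hxh])
              (show (0:ℝ) ≤ η / σ ^ 2 by positivity)]
          have hq2 := mul_le_mul_of_nonneg_left hq1 hν.le
          have hq3 : ν * (4 * (η / σ ^ 2)) = 4 * η * (ν / σ ^ 2) := by ring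
          linarith
        have hlast := mul_le_mul_of_nonneg_left hκ42 (by positivity : (0:ℝ) ≤ 4 * η)
        calc ν * ((η / σ ^ 2) / x ^ 2) ≤ 4 * η * κ ^ 2 := hstep1
          _ ≤ 4 * η * κ ^ 4 := by nlinarith [hlast]
  -- final assembly
  set c₁ : ℝ := sNorm (Xh 1 - (Sg 1).toBlocks₁₁) / σ ^ 2 with hc₁def
  have hc₁0 : 0 ≤ c₁ := div_nonneg (sNorm_nonneg' _) (by positivity)
  have hbase : ∀ v, |v ⬝ᵥ ((Xh 1 - (Sg 1).toBlocks₁₁) *ᵥ v)|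
      ≤ c₁ * (v ⬝ᵥ ((Sg 1).toBlocks₁₁ *ᵥ v)) := by
    intro v
    have h1 := quad_abs_le (Xh 1 - (Sg 1).toBlocks₁₁) v
    have h2 := hF2 1 le_rfl v
    have h3 : c₁ * σ ^ 2 = sNorm (Xh 1 - (Sg 1).toBlocks₁₁) := by
      rw [hc₁def]
      field_simp
    have h4 : sNorm (Xh 1 - (Sg 1).toBlocks₁₁) * (v ⬝ᵥ v) = c₁ * (σ ^ 2 * (v ⬝ᵥ v)) := by
      rw [← h3]; ring
    have h5 := mul_le_mul_of_nonneg_left h2 hc₁0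
    linarith
  have hmain := quad_induction (fun s => Xh s - (Sg s).toBlocks₁₁)
      (fun s => (Sg s).toBlocks₁₁)
      (fun s => A + B * extractK (Sg s))
      (fun s => (Sg (s + 1)).toBlocks₁₁ - (Sg s).toBlocks₁₁)
      η a b c₁ Bc hErec hΔq (fun s hs v => hXnn s hs v)
      (fun s hs v => hstep s hs v) (fun s hs v => hb s hs v)
      ha0 hBc hc₁0 hBc0 hbase
  have hq := hmain t
  -- symmetry of the final error matrix
  have hEsymT : (Xh (t + 1) - (Sg (t + 1)).toBlocks₁₁)ᵀ
      = Xh (t + 1) - (Sg (t + 1)).toBlocks₁₁ := by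
    rw [transpose_sub, hXhsym (t + 1) (by omega), hXsym (t + 1) (by omega)]
  have hCoef : 0 ≤ a ^ t * c₁ + Bc := by positivity
  have hquadfinal : ∀ v, |v ⬝ᵥ ((Xh (t + 1) - (Sg (t + 1)).toBlocks₁₁) *ᵥ v)|
      ≤ (a ^ t * c₁ + Bc) * ν * (v ⬝ᵥ v) := by
    intro v
    have h1 := hq v
    have h2 := hF3 (t + 1) (by omega) v
    have h3 := mul_le_mul_of_nonneg_left h2 hCoef
    have h4 : (a ^ t * c₁ + Bc) * ν * (v ⬝ᵥ v) = (a ^ t * c₁ + Bc) * (ν * (v ⬝ᵥ v)) := by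
      ring
    linarith
  have hsn := sNorm_le_of_quad (Xh (t + 1) - (Sg (t + 1)).toBlocks₁₁) hEsymT
      ((a ^ t * c₁ + Bc) * ν) (by positivity) hquadfinal
  -- scalar comparisons
  have hxκ : (1 : ℝ) / κ ^ 2 = x := by
    rw [hκ2, hxdef, one_div_div]
  have hexp : a ^ t ≤ Real.exp (-((t : ℝ) / (2 * κ ^ 2))) := by
    have h1 : a ≤ Real.exp (-(x / 2)) := by
      have := Real.add_one_le_exp (-(x / 2))
      linarith [hahalf]
    have h2 : a ^ t ≤ (Real.exp (-(x / 2))) ^ t := pow_le_pow_left₀ ha0 h1 t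
    rw [← Real.exp_nat_mul] at h2
    have h3 : (t : ℝ) * (-(x / 2)) = -((t : ℝ) / (2 * κ ^ 2)) := by
      rw [← hxκ]
      ring
    rwa [h3] at h2
  have hνc₁ : ν * c₁ = κ ^ 2 * sNorm (Xh 1 - (Sg 1).toBlocks₁₁) := by
    rw [hc₁def, hκ2]
    field_simp
  have hterm1 : a ^ t * c₁ * ν
      ≤ κ ^ 2 * Real.exp (-((t : ℝ) / (2 * κ ^ 2))) * sNorm (Xh 1 - (Sg 1).toBlocks₁₁) := by
    have h0 : 0 ≤ κ ^ 2 * sNorm (Xh 1 - (Sg 1).toBlocks₁₁) := by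
      have := sNorm_nonneg' (Xh 1 - (Sg 1).toBlocks₁₁)
      positivity
    have h1 := mul_le_mul_of_nonneg_left hexp h0
    calc a ^ t * c₁ * ν = (ν * c₁) * a ^ t := by ring
      _ = (κ ^ 2 * sNorm (Xh 1 - (Sg 1).toBlocks₁₁)) * a ^ t := by rw [hνc₁]
      _ ≤ (κ ^ 2 * sNorm (Xh 1 - (Sg 1).toBlocks₁₁)) * Real.exp (-((t : ℝ) / (2 * κ ^ 2))) :=
          h1
      _ = κ ^ 2 * Real.exp (-((t : ℝ) / (2 * κ ^ 2))) * sNorm (Xh 1 - (Sg 1).toBlocks₁₁) := by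
          ring
  have hfinal : (a ^ t * c₁ + Bc) * ν = a ^ t * c₁ * ν + ν * Bc := by ring
  linarith [hsn, hterm1, hνBc]
end
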